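/- Let D be an m×p real matrix with unit-norm columns, partitioned into q groups of columns each of size g. Then the sparse block coherence μ_B^{ss} satisfies 0 ≤ μ_B^{ss} ≤ (s/g)·μ, where μ is the standard coherence of D. -/

import Mathlib

noncomputable def l2 {α : Type*} [Fintype α] (x : α → ℝ) : ℝ := Real.sqrt (∑ i, x i ^ 2)
noncomputable def l0 {α : Type*} (x : α → ℝ) : ℕ := Nat.card {i // x i ≠ 0}

/-- Largest `s`-sparse singular value of `Z`. -/
noncomputable def rhoSS {α β : Type*} [Fintype α] [Fintype β]
    (s : ℕ) (Z : Matrix α β ℝ) : ℝ :=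
  sSup {x | ∃ u : α → ℝ, ∃ v : β → ℝ,
    l2 u = 1 ∧ l2 v = 1 ∧ l0 u ≤ s ∧ l0 v ≤ s ∧ x = |dotProduct u (Z.mulVec v)|}

/-- The submatrix `D_Gᵀ D_F` of the Gram matrix for groups `G, F`. -/
noncomputable def gram {m q g : ℕ} (D : Matrix (Fin m) (Fin q × Fin g) ℝ)
    (G F : Fin q) : Matrix (Fin g) (Fin g) ℝ :=
  fun a b => ∑ i, D i (G, a) * D i (F, b)

/-- Standard coherence of `D`. -/
noncomputable def coh {m q g : ℕ} (D : Matrix (Fin m) (Fin q × Fin g) ℝ) : ℝ :=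
  sSup {x | ∃ i j : Fin q × Fin g, i ≠ j ∧ x = |∑ r, D r i * D r j|}

/-- The sparse block coherence `μ_B^{ss}`. -/
noncomputable def muBss {m q g : ℕ} (s : ℕ) (D : Matrix (Fin m) (Fin q × Fin g) ℝ) : ℝ :=
  sSup {x | ∃ G F : Fin q, G ≠ F ∧ x = (1 / (g : ℝ)) * rhoSS s (gram D G F)}

/-- ℓ¹ norm of an `s`-sparse unit vector is at most `√s`. -/
lemma l1_le_sqrt {α : Type*} [Fintype α] {u : α → ℝ} {s : ℕ}
    (h2 : l2 u = 1) (h0 : l0 u ≤ s) : ∑ i, |u i| ≤ Real.sqrt s := by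
  have hsq : ∑ i, u i ^ 2 = 1 := by
    have hnn : 0 ≤ ∑ i, u i ^ 2 := Finset.sum_nonneg fun i _ => sq_nonneg _
    have := h2
    unfold l2 at this
    nlinarith [Real.sq_sqrt hnn, this]
  set T : Finset α := Finset.univ.filter (fun i => u i ≠ 0) with hT
  have hcard : T.card = l0 u := by
    unfold l0
    rw [Nat.card_eq_fintype_card, Fintype.card_subtype]
  have hsum : ∑ i, |u i| = ∑ i ∈ T, |u i| * 1 := by
    rw [Finset.sum_filter]
    apply Finset.sum_congr rfl
    intro i _
    by_cases h : u i = 0 <;> simp [h]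
  have hCS := Finset.sum_mul_sq_le_sq_mul_sq T (fun i => |u i|) (fun _ => 1)
  have hsq2 : ∑ i ∈ T, |u i| ^ 2 ≤ 1 := by
    rw [← hsq]
    simp_rw [sq_abs]
    exact Finset.sum_le_sum_of_subset_of_nonneg (Finset.filter_subset _ _)
      (fun i _ _ => sq_nonneg _)
  have hone : ∑ _i ∈ T, (1:ℝ) ^ 2 = T.card := by simp
  have hcard_le : (T.card : ℝ) ≤ s := by
    exact_mod_cast hcard ▸ h0
  rw [hsum]
  rw [Real.le_sqrt (Finset.sum_nonneg fun i _ => mul_nonneg (abs_nonneg _) zero_le_one)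
    (Nat.cast_nonneg s)]
  calc (∑ i ∈ T, |u i| * 1) ^ 2 ≤ (∑ i ∈ T, |u i| ^ 2) * ∑ _i ∈ T, (1:ℝ)^2 := hCS
    _ ≤ 1 * (s : ℝ) := by
        apply mul_le_mul hsq2 (hone ▸ hcard_le) (by positivity) zero_le_one
    _ = s := one_mul _

lemma abs_inner_le_one {m : ℕ} {f h : Fin m → ℝ}
    (hf : ∑ i, f i ^ 2 = 1) (hh : ∑ i, h i ^ 2 = 1) : |∑ i, f i * h i| ≤ 1 := by
  have hCS := Finset.sum_mul_sq_le_sq_mul_sq Finset.univ f h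
  rw [hf, hh] at hCS
  nlinarith [sq_abs (∑ i, f i * h i), abs_nonneg (∑ i, f i * h i)]

theorem muBss_le {m q g s : ℕ} (D : Matrix (Fin m) (Fin q × Fin g) ℝ)
    (hunit : ∀ j, ∑ i, D i j ^ 2 = 1) (hs1 : 1 ≤ s) (hsg : s ≤ g) :
    0 ≤ muBss s D ∧ muBss s D ≤ ((s : ℝ) / g) * coh D := by
  have hg0 : (0:ℝ) < g := by
    have : 1 ≤ g := le_trans hs1 hsg
    exact_mod_cast Nat.lt_of_lt_of_le Nat.zero_lt_one this
  -- basic nonnegativity facts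
  have hrho_nonneg : ∀ {α β : Type} [Fintype α] [Fintype β] (Z : Matrix α β ℝ),
      0 ≤ rhoSS s Z := by
    intro α β _ _ Z
    apply Real.sSup_nonneg
    rintro x ⟨u, v, _, _, _, _, rfl⟩
    exact abs_nonneg _
  have hcoh_nonneg : 0 ≤ coh D := by
    apply Real.sSup_nonneg
    rintro x ⟨i, j, _, rfl⟩
    exact abs_nonneg _
  have hcoh_bdd : BddAbove {x | ∃ i j : Fin q × Fin g, i ≠ j ∧ x = |∑ r, D r i * D r j|} := by
    refine ⟨1, ?_⟩
    rintro x ⟨i, j, _, rfl⟩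
    exact abs_inner_le_one (hunit i) (hunit j)
  -- entry bound
  have hentry : ∀ (G F : Fin q), G ≠ F → ∀ a b, |gram D G F a b| ≤ coh D := by
    intro G F hGF a b
    apply le_csSup hcoh_bdd
    exact ⟨(G, a), (F, b), by simp [hGF], rfl⟩
  constructor
  · apply Real.sSup_nonneg
    rintro x ⟨G, F, hGF, rfl⟩
    exact mul_nonneg (by positivity) (hrho_nonneg _)
  · apply Real.sSup_le
    · rintro x ⟨G, F, hGF, rfl⟩
      have hrho : rhoSS s (gram D G F) ≤ (s : ℝ) * coh D := by
        apply Real.sSup_le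
        · rintro x ⟨u, v, hu2, hv2, hu0, hv0, rfl⟩
          have hu1 := l1_le_sqrt hu2 hu0
          have hv1 := l1_le_sqrt hv2 hv0
          have key : |dotProduct u ((gram D G F).mulVec v)|
              ≤ (∑ a, |u a|) * (∑ b, |v b|) * coh D := by
            unfold dotProduct Matrix.mulVec dotProduct
            calc |∑ a, u a * ∑ b, gram D G F a b * v b|
                ≤ ∑ a, |u a * ∑ b, gram D G F a b * v b| := Finset.abs_sum_le_sum_abs _ _
              _ ≤ ∑ a, |u a| * (∑ b, |v b| * coh D) := by
                  apply Finset.sum_le_sum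
                  intro a _
                  rw [abs_mul]
                  apply mul_le_mul_of_nonneg_left _ (abs_nonneg _)
                  calc |∑ b, gram D G F a b * v b| ≤ ∑ b, |gram D G F a b * v b| :=
                        Finset.abs_sum_le_sum_abs _ _
                    _ ≤ ∑ b, |v b| * coh D := by
                        apply Finset.sum_le_sum
                        intro b _
                        rw [abs_mul, mul_comm]
                        exact mul_le_mul_of_nonneg_left (hentry G F hGF a b) (abs_nonneg _)
              _ = (∑ a, |u a|) * (∑ b, |v b|) * coh D := by
                  rw [← Finset.sum_mul, ← Finset.sum_mul, mul_assoc]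
          have hsqrt : Real.sqrt s * Real.sqrt s = s := Real.mul_self_sqrt (Nat.cast_nonneg s)
          calc |dotProduct u ((gram D G F).mulVec v)|
              ≤ (∑ a, |u a|) * (∑ b, |v b|) * coh D := key
            _ ≤ Real.sqrt s * Real.sqrt s * coh D := by
                apply mul_le_mul_of_nonneg_right _ hcoh_nonneg
                exact mul_le_mul hu1 hv1
                  (Finset.sum_nonneg fun i _ => abs_nonneg _) (Real.sqrt_nonneg _)
            _ = (s : ℝ) * coh D := by rw [hsqrt]
        · positivity
      calc (1 / (g:ℝ)) * rhoSS s (gram D G F) ≤ (1 / (g:ℝ)) * ((s:ℝ) * coh D) := by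
            exact mul_le_mul_of_nonneg_left hrho (by positivity)
        _ = ((s:ℝ) / g) * coh D := by ring
    · positivity
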